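/- arXiv:1707.02380 — 3 statements merged into one kernel-verified Lean document; each statement's English description precedes it below -/
import Mathlib

section
/- For all complex numbers x, x̄ (with x̄ ≠ 0 allowed) and positive reals y, ȳ, the inequality ln(1 + |x|²/y) ≥ ln(1 + |x̄|²/ȳ) - |x̄|²/ȳ + 2·Re(x̄* x)/ȳ - |x̄|²(|x|² + y)/(ȳ(ȳ + |x̄|²)) holds, i.e., the function (x,y) ↦ ln(1 + |x|²/y) admits this first-order lower bound at (x̄, ȳ). -/
theorem stmt_0 (x xb : ℂ) (y yb : ℝ) (hy : 0 < y) (hyb : 0 < yb) :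
    Real.log (1 + ‖x‖ ^ 2 / y) ≥
      Real.log (1 + ‖xb‖ ^ 2 / yb) - ‖xb‖ ^ 2 / yb
        + 2 * ((starRingEnd ℂ xb * x).re) / yb
        - ‖xb‖ ^ 2 * (‖x‖ ^ 2 + y) / (yb * (yb + ‖xb‖ ^ 2)) := by
  set p := ‖x‖ with hpdef
  set q := ‖xb‖ with hqdef
  have hp : 0 ≤ p := norm_nonneg _
  have hq : 0 ≤ q := norm_nonneg _
  have hay : (0:ℝ) < p ^ 2 + y := by positivity
  have hs : (0:ℝ) < yb + q ^ 2 := by positivity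
  have hA : (0:ℝ) < 1 + p ^ 2 / y := by positivity
  have hB : (0:ℝ) < 1 + q ^ 2 / yb := by positivity
  have hre : (starRingEnd ℂ xb * x).re ≤ q * p := by
    calc (starRingEnd ℂ xb * x).re ≤ ‖starRingEnd ℂ xb * x‖ :=
          Complex.re_le_norm _
      _ = q * p := by rw [norm_mul, Complex.norm_conj]
  have key := Real.log_le_sub_one_of_pos
    (show (0:ℝ) < (1 + q ^ 2 / yb) / (1 + p ^ 2 / y) by positivity)
  rw [Real.log_div (ne_of_gt hB) (ne_of_gt hA)] at key
  have e1 : (1 + q ^ 2 / yb) / (1 + p ^ 2 / y) = (yb + q ^ 2) * y / ((p ^ 2 + y) * yb) := by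
    field_simp
    try ring
  rw [e1] at key
  have hsq : (0:ℝ) ≤ ((yb + q ^ 2) * p - q * (p ^ 2 + y)) ^ 2 / ((p ^ 2 + y) * yb * (yb + q ^ 2)) :=
    div_nonneg (sq_nonneg _) (by positivity)
  have halg : (yb + q ^ 2) * y / ((p ^ 2 + y) * yb) - 1 ≤
      q ^ 2 / yb - 2 * (q * p) / yb + q ^ 2 * (p ^ 2 + y) / (yb * (yb + q ^ 2)) := by
    have hid : q ^ 2 / yb - 2 * (q * p) / yb + q ^ 2 * (p ^ 2 + y) / (yb * (yb + q ^ 2))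
        - ((yb + q ^ 2) * y / ((p ^ 2 + y) * yb) - 1)
        = ((yb + q ^ 2) * p - q * (p ^ 2 + y)) ^ 2 / ((p ^ 2 + y) * yb * (yb + q ^ 2)) := by
      field_simp
      try ring
    linarith [hid ▸ hsq]
  have hre' : 2 * (starRingEnd ℂ xb * x).re / yb ≤ 2 * (q * p) / yb := by
    gcongr
  linarith
end

section
/- For N×N Hermitian matrices F and A with F positive semidefinite, tr(F·A) ≥ Σᵢ λᵢ(F)·λ_{N−i+1}(A), where λ₁ ≥ λ₂ ≥ ... ≥ λ_N denote eigenvalues sorted in decreasing order. -/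
/-- Rearrangement lower bound: for antitone `μ, ν`, the reversed pairing minimizes
the sum over all permutations. -/
lemma vn_rearrange {N : ℕ} (μ ν : Fin N → ℝ) (hμ : Antitone μ) (hν : Antitone ν)
    (π : Equiv.Perm (Fin N)) :
    ∑ i : Fin N, μ i * ν (Fin.rev i) ≤ ∑ i : Fin N, μ i * ν (π i) := by
  have hrev : Antitone (Fin.rev : Fin N → Fin N) := fun i j h => Fin.rev_le_rev.mpr h
  have hg : Monotone (fun i : Fin N => ν (Fin.rev i)) := hν.comp hrev
  have hanti : Antivary μ (fun i : Fin N => ν (Fin.rev i)) := by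
    intro i j hij
    exact hμ (le_of_not_gt fun h => (hg h.le).not_gt hij)
  have := hanti.sum_mul_le_sum_mul_comp_perm (σ := π.trans Fin.revPerm)
  simpa [Fin.rev_rev] using this

/-- The doubly-stochastic lower bound via Birkhoff. -/
lemma vn_ds {N : ℕ} (μ ν : Fin N → ℝ) (hμ : Antitone μ) (hν : Antitone ν)
    (S : Matrix (Fin N) (Fin N) ℝ) (hS : S ∈ doublyStochastic ℝ (Fin N)) :
    ∑ i : Fin N, μ i * ν (Fin.rev i) ≤ ∑ i : Fin N, ∑ j : Fin N, S i j * (μ i * ν j) := by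
  obtain ⟨w, hw0, hw1, hwS⟩ := exists_eq_sum_perm_of_mem_doublyStochastic hS
  have hSij : ∀ i j, S i j = ∑ π : Equiv.Perm (Fin N), w π * π.permMatrix ℝ i j := by
    intro i j
    rw [← hwS]
    simp [Matrix.sum_apply]
  calc ∑ i : Fin N, μ i * ν (Fin.rev i)
      = ∑ π : Equiv.Perm (Fin N), w π * ∑ i : Fin N, μ i * ν (Fin.rev i) := by
        rw [← Finset.sum_mul, hw1, one_mul]
    _ ≤ ∑ π : Equiv.Perm (Fin N), w π * ∑ i : Fin N, μ i * ν (π i) := by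
        exact Finset.sum_le_sum fun π _ =>
          mul_le_mul_of_nonneg_left (vn_rearrange μ ν hμ hν π) (hw0 π)
    _ = ∑ π : Equiv.Perm (Fin N), ∑ i : Fin N, ∑ j : Fin N,
          w π * π.permMatrix ℝ i j * (μ i * ν j) := by
        refine Finset.sum_congr rfl fun π _ => ?_
        rw [Finset.mul_sum]
        refine Finset.sum_congr rfl fun i _ => ?_
        simp [Equiv.Perm.permMatrix, PEquiv.toMatrix_apply, Equiv.toPEquiv_apply, ite_mul]
    _ = ∑ i : Fin N, ∑ j : Fin N, S i j * (μ i * ν j) := by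
        rw [Finset.sum_comm]
        refine Finset.sum_congr rfl fun i _ => ?_
        rw [Finset.sum_comm]
        refine Finset.sum_congr rfl fun j _ => ?_
        rw [hSij, Finset.sum_mul]



open ComplexOrder in
/-- Lower Ruhe/von Neumann trace inequality: for Hermitian `F, A` with `F` PSD,
`tr(F·A) ≥ ∑ i, λ_i(F) · λ_{N-i+1}(A)` where `μ, ν` enumerate the eigenvalues of
`F` and `A` respectively in decreasing order. -/
theorem stmt_6 {N : ℕ} (F A : Matrix (Fin N) (Fin N) ℂ)
    (hF : F.IsHermitian) (hA : A.IsHermitian) (hFpsd : F.PosSemidef)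
    (μ ν : Fin N → ℝ) (σF σA : Equiv.Perm (Fin N))
    (hμ : μ = hF.eigenvalues ∘ σF) (hν : ν = hA.eigenvalues ∘ σA)
    (hμdec : Antitone μ) (hνdec : Antitone ν) :
    ∑ i : Fin N, μ i * ν (Fin.rev i) ≤ (F * A).trace.re := by
  classical
  set U : Matrix (Fin N) (Fin N) ℂ := (hF.eigenvectorUnitary : Matrix (Fin N) (Fin N) ℂ) with hU
  set V : Matrix (Fin N) (Fin N) ℂ := (hA.eigenvectorUnitary : Matrix (Fin N) (Fin N) ℂ) with hV
  set W : Matrix (Fin N) (Fin N) ℂ := star U * V with hWdef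
  set fe := hF.eigenvalues with hfe
  set ae := hA.eigenvalues with hae
  set DF : Matrix (Fin N) (Fin N) ℂ := Matrix.diagonal (RCLike.ofReal ∘ fe) with hDF
  set DA : Matrix (Fin N) (Fin N) ℂ := Matrix.diagonal (RCLike.ofReal ∘ ae) with hDA
  have hU1 : U * star U = 1 := Matrix.mem_unitaryGroup_iff.mp hF.eigenvectorUnitary.2
  have hU2 : star U * U = 1 := Matrix.mem_unitaryGroup_iff'.mp hF.eigenvectorUnitary.2
  have hV1 : V * star V = 1 := Matrix.mem_unitaryGroup_iff.mp hA.eigenvectorUnitary.2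
  have hV2 : star V * V = 1 := Matrix.mem_unitaryGroup_iff'.mp hA.eigenvectorUnitary.2
  have hW1 : W * star W = 1 := by
    rw [hWdef, StarMul.star_mul, star_star, Matrix.mul_assoc, ← Matrix.mul_assoc V, hV1,
      Matrix.one_mul, hU2]
  have hW2 : star W * W = 1 := by
    rw [hWdef, StarMul.star_mul, star_star, Matrix.mul_assoc, ← Matrix.mul_assoc U, hU1,
      Matrix.one_mul, hV2]
  have h1 : F * A = U * (DF * (star U * (V * (DA * star V)))) := by
    rw [hF.spectral_theorem, hA.spectral_theorem]
    simp only [Unitary.conjStarAlgAut_apply, Matrix.mul_assoc, hU, hV, hDF, hDA, hfe, hae]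
  have h2 : (F * A).trace = (DF * (W * (DA * star W))).trace := by
    rw [h1, Matrix.trace_mul_comm]
    congr 1
    rw [hWdef, StarMul.star_mul, star_star]
    simp only [Matrix.mul_assoc]
  have h3 : (F * A).trace.re = ∑ i : Fin N, ∑ j : Fin N, fe i * ae j * Complex.normSq (W i j) := by
    rw [h2]
    have : (DF * (W * (DA * star W))).trace
        = ∑ i : Fin N, ∑ j : Fin N, ((fe i * ae j * Complex.normSq (W i j) : ℝ) : ℂ) := by
      rw [Matrix.trace]
      refine Finset.sum_congr rfl fun i _ => ?_
      rw [Matrix.diag_apply, Matrix.diagonal_mul, Matrix.mul_apply, Finset.mul_sum]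
      refine Finset.sum_congr rfl fun j _ => ?_
      rw [Matrix.diagonal_mul, Matrix.star_apply, Complex.star_def]
      push_cast
      rw [← Complex.mul_conj]
      simp only [Function.comp_apply, RCLike.ofReal_alg, Complex.coe_algebraMap,
        Complex.real_smul]
      ring
    rw [this]
    push_cast
    simp
  rw [h3]
  -- the doubly stochastic matrix
  set T : Matrix (Fin N) (Fin N) ℝ := fun i j => Complex.normSq (W (σF i) (σA j)) with hT
  have hrow : ∀ i, ∑ j, Complex.normSq (W i j) = 1 := by
    intro i
    have := congrArg (fun M : Matrix (Fin N) (Fin N) ℂ => M i i) hW1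
    simp only [Matrix.mul_apply, Matrix.star_apply, Complex.star_def, Matrix.one_apply_eq,
      Complex.mul_conj] at this
    exact_mod_cast this
  have hcol : ∀ j, ∑ i, Complex.normSq (W i j) = 1 := by
    intro j
    have := congrArg (fun M : Matrix (Fin N) (Fin N) ℂ => M j j) hW2
    simp only [Matrix.mul_apply, Matrix.star_apply, Complex.star_def, Matrix.one_apply_eq] at this
    have h' : ∑ i, ((Complex.normSq (W i j) : ℂ)) = 1 := by
      rw [← this]
      refine Finset.sum_congr rfl fun i _ => ?_
      rw [mul_comm, Complex.mul_conj]
    exact_mod_cast h'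
  have hTds : T ∈ doublyStochastic ℝ (Fin N) := by
    rw [mem_doublyStochastic_iff_sum]
    refine ⟨fun i j => Complex.normSq_nonneg _, fun i => ?_, fun j => ?_⟩
    · rw [hT]
      rw [Equiv.sum_comp σA (fun j => Complex.normSq (W (σF i) j))]
      exact hrow _
    · rw [hT]
      rw [Equiv.sum_comp σF (fun i => Complex.normSq (W i (σA j)))]
      exact hcol _
  have key := vn_ds μ ν hμdec hνdec T hTds
  refine key.trans_eq ?_
  rw [← Equiv.sum_comp σF (fun i => ∑ j, fe i * ae j * Complex.normSq (W i j))]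
  refine Finset.sum_congr rfl fun i _ => ?_
  rw [← Equiv.sum_comp σA (fun j => fe (σF i) * ae j * Complex.normSq (W (σF i) j))]
  refine Finset.sum_congr rfl fun j _ => ?_
  rw [hT, hμ, hν]
  simp only [Function.comp_apply]
  ring
end

section
/- Let X ~ Gamma(N,1), Y ~ Exponential(β/P) be independent with β, P > 0, σ² ≥ 0, and let ε ∈ (0,1), K a positive integer. Then Pr(Y ≤ λX + σ²) ≥ ε^{1/K} holds if and only if λ ≥ [exp(−βσ²/(N P)) / (1 − ε^{1/K})^{1/N} − 1]·(P/β). -/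
open MeasureTheory ProbabilityTheory Real Set

lemma gamma_laplace {a s : ℝ} (ha : 0 < a) (hs : 0 ≤ s) :
    ∫⁻ x, ENNReal.ofReal (Real.exp (-(s * x))) * gammaPDF a 1 x
      = ENNReal.ofReal ((1 + s) ^ (-a)) := by
  have h1s : (0:ℝ) < 1 + s := by linarith
  have hpt : ∀ x, ENNReal.ofReal (Real.exp (-(s * x))) * gammaPDF a 1 x
      = ENNReal.ofReal ((1 + s) ^ (-a)) * gammaPDF a (1 + s) x := by
    intro x
    rcases lt_or_ge x 0 with hx | hx
    · rw [gammaPDF_of_neg hx, gammaPDF_of_neg hx, mul_zero, mul_zero]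
    · rw [gammaPDF_of_nonneg hx, gammaPDF_of_nonneg hx,
        ← ENNReal.ofReal_mul (Real.exp_nonneg _), ← ENNReal.ofReal_mul (by positivity)]
      congr 1
      rw [Real.one_rpow]
      rw [Real.rpow_neg h1s.le]
      have hexp : Real.exp (-(s * x)) * Real.exp (-(1 * x)) = Real.exp (-((1 + s) * x)) := by
        rw [← Real.exp_add]; ring_nf
      have hG : Real.Gamma a ≠ 0 := (Real.Gamma_pos_of_pos ha).ne'
      have hR : ((1 + s) ^ a : ℝ) ≠ 0 := (Real.rpow_pos_of_pos h1s a).ne'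
      field_simp
      rw [mul_comm x (1 + s), ← hexp, one_mul]
      ring
  simp_rw [hpt, gammaPDF]
  rw [lintegral_const_mul _ (measurable_gammaPDFReal a (1 + s)).ennreal_ofReal,
    show (∫⁻ x, ENNReal.ofReal (gammaPDFReal a (1+s) x)) = 1 from lintegral_gammaPDF_eq_one ha h1s,
    mul_one]

lemma expMeasure_Ioi {r t : ℝ} (hr : 0 < r) (ht : 0 ≤ t) :
    expMeasure r (Ioi t) = ENNReal.ofReal (Real.exp (-(r * t))) := by
  have : IsProbabilityMeasure (expMeasure r) := isProbabilityMeasure_expMeasure hr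
  have hIic : expMeasure r (Iic t) = ENNReal.ofReal (1 - Real.exp (-(r * t))) := by
    have h1 : cdf (expMeasure r) t = 1 - Real.exp (-(r * t)) := by
      have := cdf_expMeasure_eq hr t
      rw [this, if_pos ht]
    rw [cdf_eq_real, measureReal_def] at h1
    rw [← h1, ENNReal.ofReal_toReal (measure_ne_top _ _)]
  have hc := measure_compl (μ := expMeasure r) (measurableSet_Iic (a := t)) (measure_ne_top _ _)
  rw [compl_Iic] at hc
  rw [hc, hIic, measure_univ, ← ENNReal.ofReal_one,
    ← ENNReal.ofReal_sub _ (sub_nonneg.mpr (Real.exp_le_one_iff.mpr (neg_nonpos.mpr (mul_nonneg hr.le ht))))]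
  norm_num

lemma closed_form {Ω : Type*} [MeasureSpace Ω] (μ : Measure Ω) [IsProbabilityMeasure μ]
    (N : ℕ) (hN : 0 < N) (β P : ℝ) (hβ : 0 < β) (hP : 0 < P)
    (X Y : Ω → ℝ) (hXY : IndepFun X Y μ)
    (hX : μ.map X = gammaMeasure N (1 : ℝ))
    (hY : μ.map Y = expMeasure (β / P))
    (σsq : ℝ) (hσ : 0 ≤ σsq) (lam : ℝ) (hlam : 0 ≤ lam) :
    μ {ω | Y ω ≤ lam * X ω + σsq} =
      ENNReal.ofReal (1 - Real.exp (-(β / P * σsq)) * (1 + β / P * lam) ^ (-(N : ℝ))) := by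
  have hNr : (0:ℝ) < N := Nat.cast_pos.mpr hN
  have hr : (0:ℝ) < β / P := div_pos hβ hP
  haveI hG : IsProbabilityMeasure (gammaMeasure N (1:ℝ)) :=
    isProbabilityMeasure_gammaMeasure hNr one_pos
  haveI hE : IsProbabilityMeasure (expMeasure (β / P)) :=
    isProbabilityMeasure_expMeasure hr
  have hXm : AEMeasurable X μ := aemeasurable_of_map_neZero (by rw [hX]; infer_instance)
  have hYm : AEMeasurable Y μ := aemeasurable_of_map_neZero (by rw [hY]; infer_instance)
  have hmap : μ.map (fun ω => (X ω, Y ω)) = (gammaMeasure N 1).prod (expMeasure (β / P)) := by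
    rw [← hX, ← hY]
    exact (ProbabilityTheory.indepFun_iff_map_prod_eq_prod_map_map hXm hYm).mp hXY
  set S : Set (ℝ × ℝ) := {p : ℝ × ℝ | p.2 ≤ lam * p.1 + σsq} with hSdef
  have hS : MeasurableSet S := measurableSet_le measurable_snd (by fun_prop)
  have hpre : {ω | Y ω ≤ lam * X ω + σsq} = (fun ω => (X ω, Y ω)) ⁻¹' S := rfl
  rw [hpre, ← Measure.map_apply_of_aemeasurable (hXm.prodMk hYm) hS, hmap]
  have hcompl : ((gammaMeasure N 1).prod (expMeasure (β / P))) S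
      = 1 - ((gammaMeasure N 1).prod (expMeasure (β / P))) Sᶜ := by
    have := prob_compl_eq_one_sub (μ := (gammaMeasure N 1).prod (expMeasure (β / P))) hS.compl
    rwa [compl_compl] at this
  rw [hcompl, Measure.prod_apply hS.compl]
  have hsec : ∀ x : ℝ, Prod.mk x ⁻¹' Sᶜ = Set.Ioi (lam * x + σsq) := by
    intro x; ext y; simp [hSdef, not_le, Set.mem_Ioi]
  simp_rw [hsec]
  have hγneg : (gammaMeasure N 1) (Set.Iio 0) = 0 := by
    rw [gammaMeasure, withDensity_apply _ measurableSet_Iio]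
    exact lintegral_gammaPDF_of_nonpos le_rfl
  have hae : ∀ᵐ x ∂(gammaMeasure N 1), 0 ≤ x := by
    rw [ae_iff]
    simp only [not_le]
    exact hγneg
  have hcong : ∫⁻ x, (expMeasure (β / P)) (Set.Ioi (lam * x + σsq)) ∂(gammaMeasure N 1)
      = ∫⁻ x, ENNReal.ofReal (Real.exp (-(β / P * σsq)))
          * (ENNReal.ofReal (Real.exp (-(β / P * lam * x))) * gammaPDF N 1 x) ∂volume := by
    have hpdfm : Measurable (gammaPDF (N:ℝ) 1) :=
      (measurable_gammaPDFReal (N:ℝ) 1).ennreal_ofReal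
    rw [show (gammaMeasure N 1 : Measure ℝ) = volume.withDensity (gammaPDF N 1) from rfl] at hae ⊢
    rw [lintegral_withDensity_eq_lintegral_mul_non_measurable _ hpdfm
      (Filter.Eventually.of_forall fun x => ENNReal.ofReal_lt_top)]
    rw [ae_withDensity_iff hpdfm] at hae
    refine lintegral_congr_ae ?_
    filter_upwards [hae] with x hx
    rcases eq_or_ne (gammaPDF N 1 x) 0 with h0 | h0
    · simp [h0]
    · have hx0 : 0 ≤ x := hx h0
      simp only [Pi.mul_apply]
      rw [expMeasure_Ioi hr (by positivity)]
      rw [← mul_assoc, mul_comm (gammaPDF (N:ℝ) 1 x)]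
      congr 1
      rw [← ENNReal.ofReal_mul (Real.exp_nonneg _), ← Real.exp_add]
      congr 2
      ring
  have hfm : Measurable fun x : ℝ => ENNReal.ofReal (Real.exp (-(β / P * lam * x))) :=
    ((measurable_id.const_mul _).neg.exp).ennreal_ofReal
  have hpdfm : Measurable (gammaPDF (N:ℝ) 1) :=
    (measurable_gammaPDFReal (N:ℝ) 1).ennreal_ofReal
  rw [hcong, lintegral_const_mul _ (f := fun x => ENNReal.ofReal (Real.exp (-(β / P * lam * x))) * gammaPDF N 1 x) (hfm.mul hpdfm),
    show (∫⁻ x, ENNReal.ofReal (Real.exp (-(β / P * lam * x))) * gammaPDF N 1 x ∂volume)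
      = ENNReal.ofReal ((1 + β / P * lam) ^ (-(N:ℝ))) from gamma_laplace hNr (by positivity),
    ← ENNReal.ofReal_mul (Real.exp_nonneg _)]
  rw [← ENNReal.ofReal_one, ← ENNReal.ofReal_sub _ (by positivity)]


/-- With `X ~ Gamma(N,1)`, `Y ~ Exponential(β/P)` independent, `σ² ≥ 0`, `ε ∈ (0,1)`,
`K` a positive integer and `λ ≥ 0`: `Pr(Y ≤ λX + σ²) ≥ ε^{1/K}` iff
`λ ≥ [exp(−βσ²/(N P))/(1 − ε^{1/K})^{1/N} − 1]·(P/β)`. -/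
theorem stmt_13 {Ω : Type*} [MeasureSpace Ω] (μ : Measure Ω) [IsProbabilityMeasure μ]
    (N : ℕ) (hN : 0 < N) (β P : ℝ) (hβ : 0 < β) (hP : 0 < P)
    (X Y : Ω → ℝ) (hXY : IndepFun X Y μ)
    (hX : μ.map X = gammaMeasure N (1 : ℝ))
    (hY : μ.map Y = expMeasure (β / P))
    (σsq : ℝ) (hσ : 0 ≤ σsq) (ε : ℝ) (hε : ε ∈ Set.Ioo (0 : ℝ) 1)
    (K : ℕ) (hK : 0 < K) (lam : ℝ) (hlam : 0 ≤ lam) :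
    ENNReal.ofReal (ε ^ ((1 : ℝ) / K)) ≤ μ {ω | Y ω ≤ lam * X ω + σsq} ↔
      (Real.exp (-(β * σsq) / (N * P)) / (1 - ε ^ ((1 : ℝ) / K)) ^ ((1 : ℝ) / N) - 1)
          * (P / β) ≤ lam := by
  have hNr : (0:ℝ) < N := Nat.cast_pos.mpr hN
  have hr : (0:ℝ) < β / P := div_pos hβ hP
  set c : ℝ := ε ^ ((1:ℝ)/K) with hc
  have hc0 : 0 < c := Real.rpow_pos_of_pos hε.1 _
  have hc1 : c < 1 := Real.rpow_lt_one hε.1.le hε.2 (by positivity)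
  have hd0 : (0:ℝ) < 1 - c := by linarith
  have hb : (0:ℝ) < 1 + β / P * lam := by positivity
  have he : Real.exp (-(β / P * σsq)) ^ ((N:ℝ)⁻¹) = Real.exp (-(β * σsq) / (N * P)) := by
    rw [Real.rpow_def_of_pos (Real.exp_pos _), Real.log_exp]
    congr 1
    field_simp
  rw [closed_form μ N hN β P hβ hP X Y hXY hX hY σsq hσ lam hlam,
    ENNReal.ofReal_le_ofReal_iff', or_iff_left (not_le.mpr hc0)]
  have step1 : ∀ q : ℝ, (c ≤ 1 - q ↔ q ≤ 1 - c) := fun q => by constructor <;> intro <;> linarith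
  rw [step1, Real.rpow_neg hb.le, mul_inv_le_iff₀ (Real.rpow_pos_of_pos hb _),
    mul_comm (1 - c), ← div_le_iff₀ hd0,
    ← Real.rpow_inv_le_iff_of_pos (by positivity) hb.le hNr,
    Real.div_rpow (Real.exp_nonneg _) hd0.le, he, one_div (N:ℝ)]
  constructor
  · intro h
    have h2 : Real.exp (-(β * σsq) / (N * P)) / (1 - c) ^ ((N:ℝ)⁻¹) - 1 ≤ β / P * lam := by
      linarith
    have h3 := mul_le_mul_of_nonneg_right h2 (le_of_lt (div_pos hP hβ))
    have heq : β / P * lam * (P / β) = lam := by field_simp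
    linarith
  · intro h
    have h3 := mul_le_mul_of_nonneg_right h (le_of_lt (div_pos hβ hP))
    have heq : (Real.exp (-(β * σsq) / (N * P)) / (1 - c) ^ ((N:ℝ)⁻¹) - 1) * (P / β) * (β / P)
        = Real.exp (-(β * σsq) / (N * P)) / (1 - c) ^ ((N:ℝ)⁻¹) - 1 := by field_simp
    have heq2 : lam * (β / P) = β / P * lam := by ring
    linarith
end
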